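/- In the ISCP dynamic-programming setting, suppose index j+1 exists and blk(j+1) = blk(j) + 1 (i.e., S_{j+1} is the first set of its block and a previous block exists). Then for every W ⊆ α: OPT(W, j+1, 1) = min( 2 + OPT(W \ S_{j+1}, j, flag(blk(j))), 1 + OPT(W, j, flag(blk(j))) ), where arithmetic is in ℕ ∪ {∞} with c + ∞ = ∞. -/

import Mathlib

private lemma sInf_image_const_add (c : ℕ∞) (s : Set ℕ∞) :
    sInf ((fun n => c + n) '' s) = c + sInf s := by
  rcases s.eq_empty_or_nonempty with rfl | hs
  · simp
  · refine le_antisymm (sInf_le ⟨sInf s, csInf_mem hs, rfl⟩) ?_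
    exact le_sInf (by rintro _ ⟨x, hx, rfl⟩; exact add_le_add le_rfl (sInf_le hx))


/-- `OPTI S blk flag W j b` in the ISCP dynamic-programming setting: the infimum, over
all index sets `X ⊆ {i : i ≤ j}` covering `W`, containing at most one index from every
block `β_x` with `x ≤ blk j` and exactly one index from every such block whose (updated)
flag is `2`, of `2|X|` plus the number of blocks `β_x` (`x ≤ blk j`) with (updated) flag
`1` that `X` misses; here the flag of block `blk j` is overridden to be `b`.  The value
is `∞` if no such `X` exists. -/
noncomputable def OPTI {α : Type*} [DecidableEq α] {m q : ℕ}
    (S : Fin m → Finset α) (blk : Fin m → Fin q) (flag : Fin q → ℕ)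
    (W : Finset α) (j : Fin m) (b : ℕ) : ℕ∞ :=
  sInf { n : ℕ∞ | ∃ X : Finset (Fin m),
    (∀ i ∈ X, i ≤ j) ∧
    (W ⊆ X.biUnion S) ∧
    (∀ x : Fin q, x ≤ blk j → (X.filter (fun i => blk i = x)).card ≤ 1) ∧
    (∀ x : Fin q, x ≤ blk j → Function.update flag (blk j) b x = 2 →
      (X.filter (fun i => blk i = x)).card = 1) ∧
    n = 2 * (X.card : ℕ∞) +
      ((Finset.univ.filter (fun x : Fin q =>
        x ≤ blk j ∧ Function.update flag (blk j) b x = 1 ∧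
          ∀ i ∈ X, blk i ≠ x)).card : ℕ∞) }


/-- ISCP recurrence when `S_{j+1}` is the first set of its block and a
previous block exists, for flag `b = 1`:
`OPT(W, j+1, 1) = min(2 + OPT(W \\ S_{j+1}, j, flag(blk j)), 1 + OPT(W, j, flag(blk j)))`. -/
theorem iscp_recurrence_new_block_flag_one
    {α : Type*} [DecidableEq α] {m q : ℕ} (hm : 0 < m) (hq : 0 < q)
    (S : Fin m → Finset α) (blk : Fin m → Fin q)
    (hmono : Monotone blk) (hsurj : Function.Surjective blk)
    (flag : Fin q → ℕ) (hflag : ∀ x, flag x = 1 ∨ flag x = 2)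
    (j j' : Fin m) (hj' : (j' : ℕ) = (j : ℕ) + 1)
    (hblk : (blk j' : ℕ) = (blk j : ℕ) + 1)
    (W : Finset α) :
    OPTI S blk flag W j' 1 =
      min (2 + OPTI S blk flag (W \ S j') j (flag (blk j)))
        (1 + OPTI S blk flag W j (flag (blk j))) := by
  have hupd0 : Function.update flag (blk j) (flag (blk j)) = flag :=
    Function.update_eq_self _ _
  have hjj : j < j' := by rw [Fin.lt_def]; omega
  have hbb : blk j < blk j' := by rw [Fin.lt_def]; omega
  have hile : ∀ i : Fin m, i ≤ j' ↔ i ≤ j ∨ i = j' := by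
    intro i; rw [Fin.le_def, Fin.le_def, Fin.ext_iff]; omega
  have hxle : ∀ x : Fin q, x ≤ blk j' ↔ x ≤ blk j ∨ x = blk j' := by
    intro x; rw [Fin.le_def, Fin.le_def, Fin.ext_iff]; omega
  have hblt : ∀ i : Fin m, i ≤ j → blk i ≠ blk j' := fun i h =>
    ne_of_lt (lt_of_le_of_lt (hmono h) hbb)
  have hxne : ∀ x : Fin q, x ≤ blk j → x ≠ blk j' := fun x h =>
    ne_of_lt (lt_of_le_of_lt h hbb)
  unfold OPTI
  rw [hupd0]
  rw [← sInf_image_const_add 2, ← sInf_image_const_add 1, ← sInf_union]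
  congr 1
  ext n
  simp only [Set.mem_union, Set.mem_image, Set.mem_setOf_eq]
  constructor
  · rintro ⟨X, hXle, hXcov, hXcard, hXflag, rfl⟩
    by_cases hjX : j' ∈ X
    · -- j' used: corresponds to the first option
      left
      have hmiss : (Finset.univ.filter (fun x : Fin q =>
            x ≤ blk j' ∧ Function.update flag (blk j') 1 x = 1 ∧ ∀ i ∈ X, blk i ≠ x)) =
          (Finset.univ.filter (fun x : Fin q =>
            x ≤ blk j ∧ flag x = 1 ∧ ∀ i ∈ X.erase j', blk i ≠ x)) := by
        ext x
        simp only [Finset.mem_filter, Finset.mem_univ, true_and]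
        constructor
        · rintro ⟨hx1, hx2, hx3⟩
          have hxne' : x ≠ blk j' := Ne.symm (hx3 j' hjX)
          have hxj : x ≤ blk j := by
            rcases (hxle x).1 hx1 with h | h
            · exact h
            · exact absurd h hxne'
          exact ⟨hxj, by rwa [Function.update_of_ne hxne'] at hx2,
            fun i hi => hx3 i (Finset.mem_of_mem_erase hi)⟩
        · rintro ⟨hx1, hx2, hx3⟩
          have hxne' := hxne x hx1
          refine ⟨(hxle x).2 (Or.inl hx1), by rwa [Function.update_of_ne hxne'], ?_⟩
          intro i hi
          by_cases hij : i = j'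
          · subst hij; exact Ne.symm hxne'
          · exact hx3 i (Finset.mem_erase.mpr ⟨hij, hi⟩)
      refine ⟨_, ⟨X.erase j', ?_, ?_, ?_, ?_, rfl⟩, ?_⟩
      · intro i hi
        obtain ⟨hij, hiX⟩ := Finset.mem_erase.mp hi
        rcases (hile i).1 (hXle i hiX) with h | h
        · exact h
        · exact absurd h hij
      · intro a ha
        obtain ⟨haW, haS⟩ := Finset.mem_sdiff.mp ha
        obtain ⟨i, hiX, hai⟩ := Finset.mem_biUnion.mp (hXcov haW)
        have hij : i ≠ j' := fun h => haS (h ▸ hai)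
        exact Finset.mem_biUnion.mpr ⟨i, Finset.mem_erase.mpr ⟨hij, hiX⟩, hai⟩
      · intro x hx
        exact le_trans (Finset.card_le_card
          (Finset.filter_subset_filter _ (Finset.erase_subset _ _)))
          (hXcard x ((hxle x).2 (Or.inl hx)))
      · intro x hx hfx
        have hxne' := hxne x hx
        have h1 : (X.filter (fun i => blk i = x)).card = 1 :=
          hXflag x ((hxle x).2 (Or.inl hx))
            (by rw [Function.update_of_ne hxne']; exact hfx)
        have hjp : j' ∉ X.filter (fun i => blk i = x) := by
          simp only [Finset.mem_filter]
          exact fun h => hxne' (h.2.symm)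
        rw [Finset.filter_erase, Finset.erase_eq_of_notMem hjp]
        exact h1
      · rw [hmiss, ← Finset.card_erase_add_one hjX]
        push_cast
        ring
    · -- j' not used: corresponds to the second option
      right
      have hXle' : ∀ i ∈ X, i ≤ j := by
        intro i hi
        rcases (hile i).1 (hXle i hi) with h | h
        · exact h
        · exact absurd h (fun hh => hjX (hh ▸ hi))
      have hnotmem : blk j' ∉ (Finset.univ.filter (fun x : Fin q =>
          x ≤ blk j ∧ flag x = 1 ∧ ∀ i ∈ X, blk i ≠ x)) := by
        simp only [Finset.mem_filter, Finset.mem_univ, true_and, not_and]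
        intro h1
        exact absurd h1 (not_le.mpr hbb)
      have hins : (Finset.univ.filter (fun x : Fin q =>
            x ≤ blk j' ∧ Function.update flag (blk j') 1 x = 1 ∧ ∀ i ∈ X, blk i ≠ x)) =
          insert (blk j') (Finset.univ.filter (fun x : Fin q =>
            x ≤ blk j ∧ flag x = 1 ∧ ∀ i ∈ X, blk i ≠ x)) := by
        ext x
        simp only [Finset.mem_filter, Finset.mem_univ, true_and, Finset.mem_insert]
        constructor
        · rintro ⟨hx1, hx2, hx3⟩
          by_cases hxb : x = blk j'
          · exact Or.inl hxb
          · refine Or.inr ⟨?_, by rwa [Function.update_of_ne hxb] at hx2, hx3⟩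
            rcases (hxle x).1 hx1 with h | h
            · exact h
            · exact absurd h hxb
        · rintro (rfl | ⟨hx1, hx2, hx3⟩)
          · exact ⟨le_refl _, by rw [Function.update_self],
              fun i hi => hblt i (hXle' i hi)⟩
          · exact ⟨(hxle x).2 (Or.inl hx1),
              by rwa [Function.update_of_ne (hxne x hx1)], hx3⟩
      refine ⟨_, ⟨X, hXle', hXcov, ?_, ?_, rfl⟩, ?_⟩
      · intro x hx
        exact hXcard x ((hxle x).2 (Or.inl hx))
      · intro x hx hfx
        exact hXflag x ((hxle x).2 (Or.inl hx))
          (by rw [Function.update_of_ne (hxne x hx)]; exact hfx)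
      · rw [hins, Finset.card_insert_of_notMem hnotmem]
        push_cast
        ring
  · rintro (⟨nb, ⟨X, hXle, hXcov, hXcard, hXflag, rfl⟩, rfl⟩ |
      ⟨nc, ⟨X, hXle, hXcov, hXcard, hXflag, rfl⟩, rfl⟩)
    · -- first option: add j'
      have hjX : j' ∉ X := fun h => absurd (hXle j' h) (not_le.mpr hjj)
      have hmiss : (Finset.univ.filter (fun x : Fin q =>
            x ≤ blk j' ∧ Function.update flag (blk j') 1 x = 1 ∧
              ∀ i ∈ insert j' X, blk i ≠ x)) =
          (Finset.univ.filter (fun x : Fin q =>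
            x ≤ blk j ∧ flag x = 1 ∧ ∀ i ∈ X, blk i ≠ x)) := by
        ext x
        simp only [Finset.mem_filter, Finset.mem_univ, true_and, Finset.mem_insert]
        constructor
        · rintro ⟨hx1, hx2, hx3⟩
          have hxne' : x ≠ blk j' := Ne.symm (hx3 j' (Or.inl rfl))
          have hxj : x ≤ blk j := by
            rcases (hxle x).1 hx1 with h | h
            · exact h
            · exact absurd h hxne'
          exact ⟨hxj, by rwa [Function.update_of_ne hxne'] at hx2,
            fun i hi => hx3 i (Or.inr hi)⟩
        · rintro ⟨hx1, hx2, hx3⟩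
          have hxne' := hxne x hx1
          refine ⟨(hxle x).2 (Or.inl hx1), by rwa [Function.update_of_ne hxne'], ?_⟩
          rintro i (rfl | hi)
          · exact Ne.symm hxne'
          · exact hx3 i hi
      refine ⟨insert j' X, ?_, ?_, ?_, ?_, ?_⟩
      · rintro i hi
        rcases Finset.mem_insert.mp hi with rfl | hi
        · exact le_refl _
        · exact le_trans (hXle i hi) hjj.le
      · intro a ha
        by_cases h : a ∈ S j'
        · exact Finset.mem_biUnion.mpr ⟨j', Finset.mem_insert_self _ _, h⟩
        · obtain ⟨i, hiX, hai⟩ := Finset.mem_biUnion.mp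
            (hXcov (Finset.mem_sdiff.mpr ⟨ha, h⟩))
          exact Finset.mem_biUnion.mpr ⟨i, Finset.mem_insert_of_mem hiX, hai⟩
      · intro x hx
        by_cases hxb : x = blk j'
        · subst hxb
          have hempty : X.filter (fun i => blk i = blk j') = ∅ :=
            Finset.filter_eq_empty_iff.mpr (fun i hi => hblt i (hXle i hi))
          rw [Finset.filter_insert, if_pos rfl, hempty]
          simp
        · have hxj : x ≤ blk j := by
            rcases (hxle x).1 hx with h | h
            · exact h
            · exact absurd h hxb
          rw [Finset.filter_insert, if_neg (fun h => hxb h.symm)]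
          exact hXcard x hxj
      · intro x hx h2
        have hxb : x ≠ blk j' := by
          intro h
          rw [h, Function.update_self] at h2
          omega
        have hxj : x ≤ blk j := by
          rcases (hxle x).1 hx with h | h
          · exact h
          · exact absurd h hxb
        rw [Finset.filter_insert, if_neg (fun h => hxb h.symm)]
        exact hXflag x hxj (by rwa [Function.update_of_ne hxb] at h2)
      · rw [hmiss, Finset.card_insert_of_notMem hjX]
        push_cast
        ring
    · -- second option: reuse X
      have hjX : j' ∉ X := fun h => absurd (hXle j' h) (not_le.mpr hjj)
      have hnotmem : blk j' ∉ (Finset.univ.filter (fun x : Fin q =>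
          x ≤ blk j ∧ flag x = 1 ∧ ∀ i ∈ X, blk i ≠ x)) := by
        simp only [Finset.mem_filter, Finset.mem_univ, true_and, not_and]
        intro h1
        exact absurd h1 (not_le.mpr hbb)
      have hins : (Finset.univ.filter (fun x : Fin q =>
            x ≤ blk j' ∧ Function.update flag (blk j') 1 x = 1 ∧ ∀ i ∈ X, blk i ≠ x)) =
          insert (blk j') (Finset.univ.filter (fun x : Fin q =>
            x ≤ blk j ∧ flag x = 1 ∧ ∀ i ∈ X, blk i ≠ x)) := by
        ext x
        simp only [Finset.mem_filter, Finset.mem_univ, true_and, Finset.mem_insert]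
        constructor
        · rintro ⟨hx1, hx2, hx3⟩
          by_cases hxb : x = blk j'
          · exact Or.inl hxb
          · refine Or.inr ⟨?_, by rwa [Function.update_of_ne hxb] at hx2, hx3⟩
            rcases (hxle x).1 hx1 with h | h
            · exact h
            · exact absurd h hxb
        · rintro (rfl | ⟨hx1, hx2, hx3⟩)
          · exact ⟨le_refl _, by rw [Function.update_self],
              fun i hi => hblt i (hXle i hi)⟩
          · exact ⟨(hxle x).2 (Or.inl hx1),
              by rwa [Function.update_of_ne (hxne x hx1)], hx3⟩
      refine ⟨X, ?_, hXcov, ?_, ?_, ?_⟩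
      · exact fun i hi => le_trans (hXle i hi) hjj.le
      · intro x hx
        by_cases hxb : x = blk j'
        · subst hxb
          rw [Finset.filter_eq_empty_iff.mpr (fun i hi => hblt i (hXle i hi))]
          simp
        · have hxj : x ≤ blk j := by
            rcases (hxle x).1 hx with h | h
            · exact h
            · exact absurd h hxb
          exact hXcard x hxj
      · intro x hx h2
        have hxb : x ≠ blk j' := by
          intro h
          rw [h, Function.update_self] at h2
          omega
        have hxj : x ≤ blk j := by
          rcases (hxle x).1 hx with h | h
          · exact h
          · exact absurd h hxb
        exact hXflag x hxj (by rwa [Function.update_of_ne hxb] at h2)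
      · rw [hins, Finset.card_insert_of_notMem hnotmem]
        push_cast
        ring
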